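/- In a connected graph Σ of girth 2d+1 and diameter d ≥ 2, and an edge e of Σ, the number of vertices of Σ at subdivision-graph distance 2i−1 from e equals 2(k−1)^{i−1} for 1 ≤ i ≤ d, where k is the (regular) valency of Σ. -/

import Mathlib

open SimpleGraph Sum

variable {V : Type*}

/-- The subdivision graph of a simple graph: vertices are original vertices plus edges,
with adjacency given by incidence. -/
def SimpleGraph.subdivision (G : SimpleGraph V) : SimpleGraph (V ⊕ G.edgeSet) where
  Adj a b :=
    match a, b with
    | Sum.inl x, Sum.inr e => x ∈ (e : Sym2 V)
    | Sum.inr e, Sum.inl x => x ∈ (e : Sym2 V)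
    | _, _ => False
  symm := by
    constructor
    rintro (x | e) (y | f) h <;> simp_all
  loopless := by
    constructor
    rintro (x | e) h <;> simp_all


lemma SimpleGraph.Walk.transfer_self' {G : SimpleGraph V} {a b : V} (p : G.Walk a b)
    (h : ∀ e ∈ p.edges, e ∈ G.edgeSet) : p.transfer G h = p := by
  induction p <;> simp [*]

/-- Two distinct paths between the same pair of vertices yield a cycle whose length is at
most the sum of the lengths. -/
lemma girth_two_paths_aux {G : SimpleGraph V} {a b : V}
    (p q : G.Walk a b) (hp : p.IsPath) (hq : q.IsPath) (hne : p ≠ q) :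
    ∃ (c : V) (w : G.Walk c c), w.IsCycle ∧ w.length ≤ p.length + q.length := by
  classical
  set s : Set (Sym2 V) := {e | e ∈ p.edges ∨ e ∈ q.edges} with hs
  set H : SimpleGraph V := SimpleGraph.fromEdgeSet s with hH
  have hpe : ∀ e ∈ p.edges, e ∈ H.edgeSet := by
    intro e he
    rw [hH, edgeSet_fromEdgeSet]
    exact ⟨Or.inl he, G.not_isDiag_of_mem_edgeSet (p.edges_subset_edgeSet he)⟩
  have hqe : ∀ e ∈ q.edges, e ∈ H.edgeSet := by
    intro e he
    rw [hH, edgeSet_fromEdgeSet]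
    exact ⟨Or.inr he, G.not_isDiag_of_mem_edgeSet (q.edges_subset_edgeSet he)⟩
  have hHle : H ≤ G := by
    intro u v huv
    rw [hH, fromEdgeSet_adj] at huv
    rcases huv.1 with h | h
    · exact p.adj_of_mem_edges h
    · exact q.adj_of_mem_edges h
  have hHedge : H.edgeSet ⊆ s := by
    rw [hH, edgeSet_fromEdgeSet]; exact Set.diff_subset
  set p' := p.transfer H hpe with hp'
  set q' := q.transfer H hqe with hq'
  have hpq' : p' ≠ q' := by
    intro h
    apply hne
    have h2 := congrArg
      (fun r : H.Walk a b => r.transfer G (fun e he => edgeSet_mono hHle (r.edges_subset_edgeSet he))) h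
    simp only [hp', hq', Walk.transfer_transfer] at h2
    rwa [Walk.transfer_self' , Walk.transfer_self'] at h2
  have hex : ∃ (c : V) (w : H.Walk c c), w.IsCycle := by
    by_contra hcon
    push_neg at hcon
    have hac : H.IsAcyclic := fun v c hc => hcon v c hc
    have := isAcyclic_iff_path_unique.mp hac ⟨p', hp.transfer hpe⟩ ⟨q', hq.transfer hqe⟩
    exact hpq' (congrArg Subtype.val this)
  obtain ⟨c, w, hw⟩ := hex
  refine ⟨c, w.mapLe hHle, hw.mapLe hHle, ?_⟩
  have h1 : (w.mapLe hHle).length = w.length := Walk.length_map _ _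
  rw [h1]
  -- bound the length of the cycle by the number of available edges
  have hnodup : w.edges.Nodup := hw.edges_nodup
  have hsub : w.edges ⊆ p.edges ++ q.edges := by
    intro e he
    have := hHedge (w.edges_subset_edgeSet he)
    rw [hs] at this
    simpa using this
  calc w.length = w.edges.length := (Walk.length_edges w).symm
    _ = w.edges.toFinset.card := (List.toFinset_card_of_nodup hnodup).symm
    _ ≤ (p.edges ++ q.edges).toFinset.card := by
        apply Finset.card_le_card
        intro e he
        rw [List.mem_toFinset] at he ⊢
        exact hsub he
    _ ≤ (p.edges ++ q.edges).length := List.toFinset_card_le _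
    _ = p.length + q.length := by simp

section distaux

variable {G : SimpleGraph V} {x y : V} {d : ℕ}

lemma dist_add_dist_le_of_mem_support {a b w : V} (P : G.Walk a b)
    (hw : w ∈ P.support) : G.dist a w + G.dist w b ≤ P.length := by
  classical
  have hspec := P.take_spec hw
  have hlen : (P.takeUntil w hw).length + (P.dropUntil w hw).length = P.length := by
    rw [← Walk.length_append, hspec]
  calc G.dist a w + G.dist w b
      ≤ (P.takeUntil w hw).length + (P.dropUntil w hw).length :=
        Nat.add_le_add (dist_le _) (dist_le _)
    _ = P.length := hlen

lemma dist_le_dist_adj (hconn : G.Connected) {a b c : V} (h : G.Adj a b) :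
    G.dist a c ≤ G.dist b c + 1 := by
  calc G.dist a c ≤ G.dist a b + G.dist b c := hconn.dist_triangle
    _ = G.dist b c + 1 := by rw [dist_eq_one_iff_adj.mpr h, Nat.add_comm]

/-- no vertex is equidistant from two adjacent vertices at distance `< d`. -/
lemma ne_level (hconn : G.Connected) (hxy : G.Adj x y)
    (hcyc : ∀ (c : V) (w : G.Walk c c), w.IsCycle → 2 * d + 1 ≤ w.length)
    {v : V} {j : ℕ} (hj : j + 1 ≤ d) (h1 : G.dist x v = j) (h2 : G.dist y v = j) : False := by
  rcases Nat.eq_zero_or_pos j with hj0 | hj1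
  · subst hj0
    have hx : x = v := (hconn.dist_eq_zero_iff).mp h1
    have hy : y = v := (hconn.dist_eq_zero_iff).mp h2
    exact hxy.ne (hx.trans hy.symm)
  · obtain ⟨p, hp, hpl⟩ := hconn.exists_path_of_dist x v
    obtain ⟨q', hq', hq'l⟩ := hconn.exists_path_of_dist y v
    have hxs : x ∉ q'.support := by
      intro hmem
      have := dist_add_dist_le_of_mem_support q' hmem
      rw [hq'l, h2, dist_comm, dist_eq_one_iff_adj.mpr hxy, h1] at this
      omega
    have hq : (Walk.cons hxy q').IsPath := hq'.cons hxs
    have hne : p ≠ Walk.cons hxy q' := by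
      intro h
      have := congrArg Walk.length h
      rw [hpl, Walk.length_cons, hq'l, h1, h2] at this
      omega
    obtain ⟨c, w, hw, hwl⟩ := girth_two_paths_aux p (Walk.cons hxy q') hp hq hne
    have := hcyc c w hw
    rw [Walk.length_cons, hpl, hq'l, h1, h2] at hwl
    omega

/-- uniqueness of the neighbour closer to `x`. -/
lemma pred_unique (hconn : G.Connected)
    (hcyc : ∀ (c : V) (w : G.Walk c c), w.IsCycle → 2 * d + 1 ≤ w.length)
    {v : V} {m : ℕ} (hm : 1 ≤ m) (hmd : m ≤ d) (hv : G.dist x v = m)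
    {w1 w2 : V} (h1 : G.Adj w1 v) (h2 : G.Adj w2 v)
    (hd1 : G.dist x w1 = m - 1) (hd2 : G.dist x w2 = m - 1) : w1 = w2 := by
  by_contra hne
  obtain ⟨P1, hP1, hP1l⟩ := hconn.exists_path_of_dist x w1
  obtain ⟨P2, hP2, hP2l⟩ := hconn.exists_path_of_dist x w2
  have hv1 : v ∉ P1.support := by
    intro hmem
    have := dist_add_dist_le_of_mem_support P1 hmem
    have hvw : 1 ≤ G.dist v w1 := hconn.pos_dist_of_ne h1.ne'
    rw [hP1l, hd1, hv] at this
    omega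
  have hv2 : v ∉ P2.support := by
    intro hmem
    have := dist_add_dist_le_of_mem_support P2 hmem
    have hvw : 1 ≤ G.dist v w2 := hconn.pos_dist_of_ne h2.ne'
    rw [hP2l, hd2, hv] at this
    omega
  have hp : (P1.concat h1).IsPath := by
    rw [Walk.isPath_def, Walk.support_concat, List.nodup_append']
    refine ⟨hP1.support_nodup, List.nodup_singleton v, ?_⟩
    intro a ha hb
    rw [List.mem_singleton] at hb
    subst hb
    exact hv1 ha
  have hq : (P2.concat h2).IsPath := by
    rw [Walk.isPath_def, Walk.support_concat, List.nodup_append']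
    refine ⟨hP2.support_nodup, List.nodup_singleton v, ?_⟩
    intro a ha hb
    rw [List.mem_singleton] at hb
    subst hb
    exact hv2 ha
  have hpq : P1.concat h1 ≠ P2.concat h2 := by
    intro h
    have hw1mem : w1 ∈ (P1.concat h1).support := by
      rw [Walk.support_concat]
      rw [List.mem_append]
      exact Or.inl (Walk.end_mem_support P1)
    rw [h, Walk.support_concat, List.mem_append] at hw1mem
    rcases hw1mem with hmem | hmem
    · have := dist_add_dist_le_of_mem_support P2 hmem
      have h12 : 1 ≤ G.dist w1 w2 := hconn.pos_dist_of_ne hne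
      rw [hP2l, hd1, hd2] at this
      omega
    · rw [List.mem_singleton] at hmem
      subst hmem
      exact G.loopless.irrefl _ h1
  obtain ⟨c, w, hw, hwl⟩ := girth_two_paths_aux _ _ hp hq hpq
  have := hcyc c w hw
  rw [Walk.length_concat, Walk.length_concat, hP1l, hP2l, hd1, hd2] at hwl
  omega

lemma no_level_adj (hconn : G.Connected)
    (hcyc : ∀ (c : V) (w : G.Walk c c), w.IsCycle → 2 * d + 1 ≤ w.length)
    {u w : V} {j : ℕ} (hj : j + 1 ≤ d) (hu : G.dist x u = j) (hw : G.dist x w = j)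
    (ha : G.Adj u w) : False := by
  rcases Nat.eq_zero_or_pos j with hj0 | hj1
  · subst hj0
    have hx : x = u := (hconn.dist_eq_zero_iff).mp hu
    have hy : x = w := (hconn.dist_eq_zero_iff).mp hw
    exact ha.ne (hx.symm.trans hy)
  · obtain ⟨p, hp, hpl⟩ := hconn.exists_path_of_dist x u
    obtain ⟨P, hP, hPl⟩ := hconn.exists_path_of_dist x w
    have hus : u ∉ P.support := by
      intro hmem
      have := dist_add_dist_le_of_mem_support P hmem
      have h1 : 1 ≤ G.dist u w := hconn.pos_dist_of_ne ha.ne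
      rw [hPl, hu, hw] at this
      omega
    have hq : (P.concat ha.symm).IsPath := by
      rw [Walk.isPath_def, Walk.support_concat, List.nodup_append']
      refine ⟨hP.support_nodup, List.nodup_singleton u, ?_⟩
      intro a hamem hb
      rw [List.mem_singleton] at hb
      subst hb
      exact hus hamem
    have hne : p ≠ P.concat ha.symm := by
      intro h
      have := congrArg Walk.length h
      rw [hpl, Walk.length_concat, hPl, hu, hw] at this
      omega
    obtain ⟨c, w', hw', hwl⟩ := girth_two_paths_aux _ _ hp hq hne
    have := hcyc c w' hw'
    rw [hpl, Walk.length_concat, hPl, hu, hw] at hwl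
    omega

lemma no_cross_adj (hconn : G.Connected) (hxy : G.Adj x y)
    (hcyc : ∀ (c : V) (w : G.Walk c c), w.IsCycle → 2 * d + 1 ≤ w.length)
    {u w : V} {j : ℕ} (hj1 : 1 ≤ j) (hj : j + 1 ≤ d)
    (hu1 : G.dist x u = j) (hu2 : G.dist y u = j + 1)
    (hw1 : G.dist x w = j + 1) (hw2 : G.dist y w = j)
    (ha : G.Adj u w) : False := by
  obtain ⟨P, hP, hPl⟩ := hconn.exists_path_of_dist x u
  obtain ⟨Q, hQ, hQl⟩ := hconn.exists_path_of_dist y w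
  have hws : w ∉ P.support := by
    intro hmem
    have := dist_add_dist_le_of_mem_support P hmem
    rw [hPl, hw1] at this
    omega
  have hp : (P.concat ha).IsPath := by
    rw [Walk.isPath_def, Walk.support_concat, List.nodup_append']
    refine ⟨hP.support_nodup, List.nodup_singleton w, ?_⟩
    intro a hamem hb
    rw [List.mem_singleton] at hb
    subst hb
    exact hws hamem
  have hxs : x ∉ Q.support := by
    intro hmem
    have := dist_add_dist_le_of_mem_support Q hmem
    rw [hQl, show G.dist y x = G.dist x y from SimpleGraph.dist_comm, dist_eq_one_iff_adj.mpr hxy, hw1, hw2] at this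
    omega
  have hq : (Walk.cons hxy Q).IsPath := hQ.cons hxs
  have hne : P.concat ha ≠ Walk.cons hxy Q := by
    intro h
    have hymem : y ∈ (Walk.cons hxy Q).support := by
      rw [Walk.support_cons]
      exact List.mem_cons_of_mem _ (Walk.start_mem_support Q)
    rw [← h, Walk.support_concat, List.mem_append] at hymem
    rcases hymem with hmem | hmem
    · have := dist_add_dist_le_of_mem_support P hmem
      rw [hPl, show G.dist x y = 1 from dist_eq_one_iff_adj.mpr hxy] at this
      rw [show G.dist y u = j + 1 from hu2] at this
      omega
    · rw [List.mem_singleton] at hmem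
      subst hmem
      rw [dist_self] at hw2
      omega
  obtain ⟨c, w', hw', hwl⟩ := girth_two_paths_aux _ _ hp hq hne
  have := hcyc c w' hw'
  rw [Walk.length_concat, Walk.length_cons, hPl, hQl, hu1, hw2] at hwl
  omega

lemma exists_pred (hconn : G.Connected) {v : V} {m : ℕ} (hm : 1 ≤ m)
    (hv : G.dist x v = m) : ∃ w, G.Adj w v ∧ G.dist x w = m - 1 := by
  obtain ⟨P, hP, hPl⟩ := hconn.exists_path_of_dist x v
  have hnn : ¬ P.reverse.Nil := by
    rw [Walk.not_nil_iff_lt_length, Walk.length_reverse, hPl, hv]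
    omega
  obtain ⟨u, h, Q, hQ⟩ := Walk.not_nil_iff.mp hnn
  refine ⟨u, h.symm, ?_⟩
  have hle : G.dist x u ≤ m - 1 := by
    have : G.dist u x ≤ Q.length := dist_le Q
    have hlen : Q.length = m - 1 := by
      have := congrArg Walk.length hQ
      rw [Walk.length_reverse, hPl, hv, Walk.length_cons] at this
      omega
    rw [SimpleGraph.dist_comm] at this
    omega
  have hge : m - 1 ≤ G.dist x u := by
    have h2 : G.dist x v ≤ G.dist x u + 1 := by
      calc G.dist x v ≤ G.dist x u + G.dist u v := hconn.dist_triangle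
        _ ≤ G.dist x u + 1 := by
            have h3 : G.dist u v ≤ 1 := (dist_eq_one_iff_adj.mpr h.symm).le
            omega
    omega
  omega

end distaux

lemma dist_le_dist_adj' {G : SimpleGraph V} (hconn : G.Connected) {a b c : V} (h : G.Adj b c) :
    G.dist a c ≤ G.dist a b + 1 := by
  calc G.dist a c ≤ G.dist a b + G.dist b c := hconn.dist_triangle
    _ ≤ G.dist a b + 1 := by
        have := (dist_eq_one_iff_adj.mpr h).le
        omega

open scoped Classical in
lemma card_level [Fintype V] {G : SimpleGraph V} [DecidableRel G.Adj] {x y : V} {d k : ℕ}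
    (hconn : G.Connected) (hxy : G.Adj x y)
    (hcyc : ∀ (c : V) (w : G.Walk c c), w.IsCycle → 2 * d + 1 ≤ w.length)
    (hreg : G.IsRegularOfDegree k) (hk : 1 ≤ k) :
    ∀ j, j + 1 ≤ d →
      (Finset.univ.filter (fun v => G.dist x v = j ∧ G.dist y v = j + 1)).card = (k - 1) ^ j := by
  intro j
  induction j with
  | zero =>
    intro hj
    have hset : Finset.univ.filter (fun v => G.dist x v = 0 ∧ G.dist y v = 0 + 1) = {x} := by
      ext v
      simp only [Finset.mem_filter, Finset.mem_univ, true_and, Finset.mem_singleton]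
      constructor
      · rintro ⟨h0, h1⟩
        exact ((hconn.dist_eq_zero_iff).mp h0).symm
      · intro h
        rw [h]
        refine ⟨SimpleGraph.dist_self, ?_⟩
        rw [show G.dist y x = G.dist x y from SimpleGraph.dist_comm]
        exact dist_eq_one_iff_adj.mpr hxy
    rw [hset]
    simp
  | succ j ih =>
    intro hj
    have hjd : j + 1 ≤ d := by omega
    have hxv : ∀ v, G.dist x v ≤ G.dist y v + 1 := fun v => dist_le_dist_adj hconn hxy
    have hyv : ∀ v, G.dist y v ≤ G.dist x v + 1 := fun v => dist_le_dist_adj hconn hxy.symm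
    set Aj := Finset.univ.filter (fun v => G.dist x v = j ∧ G.dist y v = j + 1) with hAj
    set Aj1 := Finset.univ.filter
      (fun v => G.dist x v = (j + 1) ∧ G.dist y v = (j + 1) + 1) with hAj1
    have memAj : ∀ v, v ∈ Aj ↔ (G.dist x v = j ∧ G.dist y v = j + 1) := by
      intro v; simp [hAj]
    have memAj1 : ∀ v, v ∈ Aj1 ↔ (G.dist x v = j + 1 ∧ G.dist y v = j + 2) := by
      intro v; simp [hAj1]
    -- C1 : every vertex of `Aj1` is a neighbour of a vertex of `Aj`
    have hC1 : Aj1 = Aj.biUnion (fun u => G.neighborFinset u ∩ Aj1) := by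
      apply Finset.Subset.antisymm
      · intro v hv
        rw [memAj1 v] at hv
        obtain ⟨hv1, hv2⟩ := hv
        obtain ⟨w, hwv, hwx⟩ := exists_pred hconn (by omega) hv1
        have hwx' : G.dist x w = j := by omega
        have hwy : G.dist y w = j + 1 := by
          have h1 : G.dist y w ≤ G.dist x w + 1 := hyv w
          have h2 : G.dist y v ≤ G.dist y w + 1 := dist_le_dist_adj' hconn hwv
          omega
        rw [Finset.mem_biUnion]
        refine ⟨w, (memAj w).mpr ⟨hwx', hwy⟩, ?_⟩
        rw [Finset.mem_inter, mem_neighborFinset]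
        exact ⟨hwv, (memAj1 v).mpr ⟨hv1, hv2⟩⟩
      · intro v hv
        rw [Finset.mem_biUnion] at hv
        obtain ⟨u, -, hu⟩ := hv
        exact (Finset.mem_inter.mp hu).2
    -- C2 : the neighbourhoods are disjoint
    have hC2 : ∀ u1 ∈ Aj, ∀ u2 ∈ Aj, u1 ≠ u2 →
        Disjoint (G.neighborFinset u1 ∩ Aj1) (G.neighborFinset u2 ∩ Aj1) := by
      intro u1 hu1 u2 hu2 hne
      rw [Finset.disjoint_left]
      intro v hv1 hv2
      rw [Finset.mem_inter, mem_neighborFinset] at hv1 hv2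
      have hvx : G.dist x v = j + 1 := ((memAj1 v).mp hv1.2).1
      have hu1x : G.dist x u1 = (j + 1) - 1 := by
        have := ((memAj u1).mp hu1).1; omega
      have hu2x : G.dist x u2 = (j + 1) - 1 := by
        have := ((memAj u2).mp hu2).1; omega
      exact hne (pred_unique hconn hcyc (by omega) (by omega) hvx hv1.1 hv2.1 hu1x hu2x)
    -- C3 : each vertex of `Aj` has exactly `k - 1` neighbours in `Aj1`
    have hC3 : ∀ u ∈ Aj, (G.neighborFinset u ∩ Aj1).card = k - 1 := by
      intro u hu
      obtain ⟨hu1, hu2⟩ := (memAj u).mp hu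
      have hNcard : (G.neighborFinset u).card = k := by
        rw [card_neighborFinset_eq_degree]; exact hreg u
      obtain ⟨w₀, hw₀⟩ :
          ∃ w₀, (G.neighborFinset u).filter (fun w => w ∉ Aj1) = {w₀} := by
        rcases Nat.eq_zero_or_pos j with hj0 | hjpos
        · -- j = 0 : u = x and the exceptional neighbour is y
          subst hj0
          have hux : u = x := ((hconn.dist_eq_zero_iff).mp hu1).symm
          refine ⟨y, ?_⟩
          ext w
          simp only [Finset.mem_filter, mem_neighborFinset, Finset.mem_singleton]
          constructor
          · rintro ⟨hadj, hnot⟩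
            rw [memAj1 w] at hnot
            have hdxw : G.dist x w = 1 := dist_eq_one_iff_adj.mpr (hux ▸ hadj)
            by_contra hwy
            have hyw0 : G.dist y w ≠ 0 := by
              intro h0
              exact hwy ((hconn.dist_eq_zero_iff).mp h0).symm
            have hyw1 : G.dist y w ≠ 1 := by
              intro h1
              exact ne_level hconn hxy hcyc (by omega) hdxw h1
            have := hyv w
            rw [hdxw] at this
            exact hnot ⟨hdxw, by omega⟩
          · intro hw
            rw [hw, hux]
            refine ⟨hxy, ?_⟩
            rw [memAj1 y]
            rintro ⟨-, h2⟩
            rw [SimpleGraph.dist_self] at h2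
            omega
        · -- j ≥ 1 : the exceptional neighbour is the predecessor of u
          obtain ⟨w₀, hadj, hwx⟩ := exists_pred hconn hjpos hu1
          refine ⟨w₀, ?_⟩
          ext w
          simp only [Finset.mem_filter, mem_neighborFinset, Finset.mem_singleton]
          constructor
          · rintro ⟨hadj', hnot⟩
            rw [memAj1 w] at hnot
            have hb1 : G.dist x w ≤ j + 1 := by
              have := dist_le_dist_adj' (a := x) hconn hadj'
              omega
            have hb2 : j ≤ G.dist x w + 1 := by
              have := dist_le_dist_adj' (a := x) hconn hadj'.symm
              omega
            have hnej : G.dist x w ≠ j := fun h => no_level_adj hconn hcyc hjd hu1 h hadj'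
            have hnej1 : G.dist x w ≠ j + 1 := by
              intro hxw
              have hyb1 : G.dist y w ≤ j + 2 := by
                have := dist_le_dist_adj' (a := y) hconn hadj'
                omega
              have hyb2 : j ≤ G.dist y w := by
                have := hxv w
                omega
              have hney1 : G.dist y w ≠ j + 1 := by
                intro hyw
                exact ne_level hconn hxy hcyc hj hxw hyw
              have hney0 : G.dist y w ≠ j := by
                intro hyw
                exact no_cross_adj hconn hxy hcyc hjpos hjd hu1 hu2 hxw hyw hadj'
              exact hnot ⟨hxw, by omega⟩
            have hxw : G.dist x w = j - 1 := by omega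
            exact pred_unique hconn hcyc hjpos (by omega) hu1 hadj'.symm hadj hxw hwx
          · intro hw
            rw [hw]
            refine ⟨hadj.symm, ?_⟩
            rw [memAj1 w₀]
            rintro ⟨h1, -⟩
            omega
      have hsplit := Finset.card_filter_add_card_filter_not
        (s := G.neighborFinset u) (p := fun w => w ∈ Aj1)
      rw [hw₀, hNcard, Finset.card_singleton] at hsplit
      have hinter : G.neighborFinset u ∩ Aj1 = (G.neighborFinset u).filter (fun w => w ∈ Aj1) := by
        ext w
        simp [Finset.mem_inter, Finset.mem_filter]
      rw [hinter]
      omega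
    rw [hC1, Finset.card_biUnion hC2]
    rw [Finset.sum_congr rfl hC3, Finset.sum_const, ih hjd, smul_eq_mul, pow_succ]

section subdiv

variable {G : SimpleGraph V}

lemma sub_adj_inl_inl {a c : V} : ¬ G.subdivision.Adj (inl a) (inl c) := fun h => h

lemma sub_adj_inr_inr {e f : G.edgeSet} : ¬ G.subdivision.Adj (inr e) (inr f) := fun h => h

lemma sub_adj_inl_inr {a : V} {f : G.edgeSet} :
    G.subdivision.Adj (inl a) (inr f) ↔ a ∈ (f : Sym2 V) := Iff.rfl

lemma sub_adj_inr_inl {a : V} {f : G.edgeSet} :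
    G.subdivision.Adj (inr f) (inl a) ↔ a ∈ (f : Sym2 V) := Iff.rfl

lemma eq_or_adj_of_mem_edge {f : G.edgeSet} {a c : V}
    (ha : a ∈ (f : Sym2 V)) (hc : c ∈ (f : Sym2 V)) : a = c ∨ G.Adj a c := by
  obtain ⟨f, hf⟩ := f
  induction f with
  | _ p q =>
    rw [SimpleGraph.mem_edgeSet] at hf
    simp only [Sym2.mem_iff] at ha hc
    rcases ha with rfl | rfl <;> rcases hc with rfl | rfl
    · exact Or.inl rfl
    · exact Or.inr hf
    · exact Or.inr hf.symm
    · exact Or.inl rfl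

/-- Lift a walk in `G` to a walk in the subdivision graph of twice the length. -/
def liftWalk : ∀ {a b : V}, G.Walk a b → G.subdivision.Walk (inl a) (inl b)
  | _, _, SimpleGraph.Walk.nil => SimpleGraph.Walk.nil
  | a, b, SimpleGraph.Walk.cons (v := c) h p =>
      SimpleGraph.Walk.cons
        (show G.subdivision.Adj (inl a) (inr ⟨s(a, c), h⟩) from Sym2.mem_mk_left a c)
        (SimpleGraph.Walk.cons
          (show G.subdivision.Adj (inr ⟨s(a, c), h⟩) (inl c) from Sym2.mem_mk_right a c)
          (liftWalk p))

lemma liftWalk_length : ∀ {a b : V} (p : G.Walk a b), (liftWalk p).length = 2 * p.length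
  | _, _, SimpleGraph.Walk.nil => rfl
  | a, b, SimpleGraph.Walk.cons h p => by
      simp only [liftWalk, SimpleGraph.Walk.length_cons, liftWalk_length p]
      omega

lemma two_mul_dist_le (hconn : G.Connected) (n : ℕ) : ∀ {a b : V} (w : G.subdivision.Walk (inl a) (inl b)),
    w.length ≤ n → 2 * G.dist a b ≤ w.length := by
  induction n with
  | zero =>
    intro a b w hw
    have h0 : w.length = 0 := Nat.le_zero.mp hw
    have : (inl a : V ⊕ G.edgeSet) = inl b := SimpleGraph.Walk.eq_of_length_eq_zero h0
    obtain rfl : a = b := inl_injective this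
    rw [SimpleGraph.dist_self]
    omega
  | succ n ih =>
    intro a b w hw
    cases w with
    | nil =>
      rw [SimpleGraph.dist_self]
      omega
    | @cons _ u _ h w' =>
      cases u with
      | inl c => exact absurd h sub_adj_inl_inl
      | inr f =>
        cases w' with
        | @cons _ u2 _ h2 w'' =>
          cases u2 with
          | inr f2 => exact absurd h2 sub_adj_inr_inr
          | inl c =>
            have ha : a ∈ (f : Sym2 V) := sub_adj_inl_inr.mp h
            have hc : c ∈ (f : Sym2 V) := sub_adj_inr_inl.mp h2
            have hlen : w''.length ≤ n := by
              simp only [SimpleGraph.Walk.length_cons] at hw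
              omega
            have hIH := ih w'' hlen
            have hd : G.dist a b ≤ G.dist c b + 1 := by
              rcases eq_or_adj_of_mem_edge ha hc with rfl | hadj
              · omega
              · calc G.dist a b ≤ G.dist a c + G.dist c b := hconn.dist_triangle
                  _ ≤ G.dist c b + 1 := by
                      have := (dist_eq_one_iff_adj.mpr hadj).le
                      omega
            simp only [SimpleGraph.Walk.length_cons]
            omega

lemma edge_walk_lower (hconn : G.Connected) {f : G.edgeSet} {b : V} (w : G.subdivision.Walk (inr f) (inl b)) :
    ∃ c ∈ (f : Sym2 V), 2 * G.dist c b + 1 ≤ w.length := by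
  cases w with
  | @cons _ u _ h w' =>
    cases u with
    | inr f2 => exact absurd h sub_adj_inr_inr
    | inl c =>
      refine ⟨c, sub_adj_inr_inl.mp h, ?_⟩
      have := two_mul_dist_le hconn w'.length w' le_rfl
      simp only [SimpleGraph.Walk.length_cons]
      omega

lemma subdivision_dist (hconn : G.Connected) {x y : V} (he : G.Adj x y) (v : V) :
    G.subdivision.dist (inr ⟨s(x, y), he⟩) (inl v)
      = 2 * min (G.dist x v) (G.dist y v) + 1 := by
  set f : G.edgeSet := ⟨s(x, y), he⟩ with hf
  have hxf : x ∈ (f : Sym2 V) := Sym2.mem_mk_left x y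
  have hyf : y ∈ (f : Sym2 V) := Sym2.mem_mk_right x y
  obtain ⟨px, hpx⟩ := (hconn x v).exists_walk_length_eq_dist
  obtain ⟨py, hpy⟩ := (hconn y v).exists_walk_length_eq_dist
  have wx : G.subdivision.Walk (inr f) (inl v) :=
    SimpleGraph.Walk.cons (sub_adj_inr_inl.mpr hxf) (liftWalk px)
  have hub : G.subdivision.dist (inr f) (inl v) ≤ 2 * min (G.dist x v) (G.dist y v) + 1 := by
    have h1 : G.subdivision.dist (inr f) (inl v) ≤ 2 * G.dist x v + 1 := by
      have := dist_le (SimpleGraph.Walk.cons (sub_adj_inr_inl.mpr hxf) (liftWalk px))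
      rw [SimpleGraph.Walk.length_cons, liftWalk_length, hpx] at this
      omega
    have h2 : G.subdivision.dist (inr f) (inl v) ≤ 2 * G.dist y v + 1 := by
      have := dist_le (SimpleGraph.Walk.cons (sub_adj_inr_inl.mpr hyf) (liftWalk py))
      rw [SimpleGraph.Walk.length_cons, liftWalk_length, hpy] at this
      omega
    rcases Nat.le_total (G.dist x v) (G.dist y v) with hle | hle
    · rw [Nat.min_eq_left hle]; exact h1
    · rw [Nat.min_eq_right hle]; exact h2
  have hreach : G.subdivision.Reachable (inr f) (inl v) := ⟨wx⟩
  obtain ⟨w, hwl⟩ := hreach.exists_walk_length_eq_dist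
  obtain ⟨c, hcf, hclb⟩ := edge_walk_lower hconn w
  have hcxy : c = x ∨ c = y := by
    rw [hf] at hcf
    simpa using hcf
  have hlb : 2 * min (G.dist x v) (G.dist y v) + 1 ≤ G.subdivision.dist (inr f) (inl v) := by
    rw [← hwl]
    rcases hcxy with rfl | rfl
    · have : min (G.dist c v) (G.dist y v) ≤ G.dist c v := Nat.min_le_left _ _
      omega
    · have : min (G.dist x v) (G.dist c v) ≤ G.dist c v := Nat.min_le_right _ _
      omega
  omega

end subdiv

theorem subdivision_sphere_card [Fintype V] (G : SimpleGraph V) [DecidableRel G.Adj]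
    (hconn : G.Connected) (k d : ℕ) (hk : 3 ≤ k) (hd : 2 ≤ d)
    (hreg : G.IsRegularOfDegree k) (hdiam : G.diam = d) (hgirth : G.girth = 2 * d + 1)
    (e : G.edgeSet) (i : ℕ) (hi1 : 1 ≤ i) (hid : i ≤ d) :
    {v : V | G.subdivision.dist (inr e) (inl v) = 2 * i - 1}.ncard
      = 2 * (k - 1) ^ (i - 1) := by
  classical
  have hcyc : ∀ (c : V) (w : G.Walk c c), w.IsCycle → 2 * d + 1 ≤ w.length := by
    intro c w hw
    have hne : G.egirth ≠ ⊤ := by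
      intro h
      have : G.girth = 0 := by
        show G.egirth.toNat = 0
        rw [h]
        rfl
      omega
    have hg' : (G.girth : ℕ∞) = G.egirth := ENat.coe_toNat hne
    have hle : G.egirth ≤ (w.length : ℕ∞) := le_egirth.mp le_rfl c w hw
    rw [← hg', hgirth] at hle
    exact_mod_cast hle
  obtain ⟨f, hf⟩ := e
  revert hf
  induction f using Sym2.ind with
  | _ x y =>
  intro hf
  have hxy : G.Adj x y := (G.mem_edgeSet).mp hf
  set j := i - 1 with hj
  have hji : i = j + 1 := by omega
  have hjd : j + 1 ≤ d := by omega
  have hxv : ∀ v, G.dist x v ≤ G.dist y v + 1 := fun v => dist_le_dist_adj hconn hxy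
  have hyv : ∀ v, G.dist y v ≤ G.dist x v + 1 := fun v => dist_le_dist_adj hconn hxy.symm
  have hset : {v : V | G.subdivision.dist (inr ⟨s(x, y), hf⟩) (inl v) = 2 * i - 1}
      = {v : V | G.dist x v = j ∧ G.dist y v = j + 1}
        ∪ {v : V | G.dist y v = j ∧ G.dist x v = j + 1} := by
    ext v
    rw [Set.mem_setOf_eq, subdivision_dist hconn hxy v, Set.mem_union,
      Set.mem_setOf_eq, Set.mem_setOf_eq]
    constructor
    · intro h
      have hmin : min (G.dist x v) (G.dist y v) = j := by omega
      have hnl : ¬ (G.dist x v = j ∧ G.dist y v = j) := by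
        rintro ⟨h1, h2⟩
        exact ne_level hconn hxy hcyc hjd h1 h2
      have := hxv v
      have := hyv v
      rcases Nat.le_total (G.dist x v) (G.dist y v) with hle | hle
      · left
        rw [Nat.min_eq_left hle] at hmin
        refine ⟨hmin, ?_⟩
        rcases Nat.lt_or_ge (G.dist y v) (j + 1) with hlt | hge
        · exact absurd ⟨hmin, by omega⟩ hnl
        · omega
      · right
        rw [Nat.min_eq_right hle] at hmin
        refine ⟨hmin, ?_⟩
        rcases Nat.lt_or_ge (G.dist x v) (j + 1) with hlt | hge
        · exact absurd ⟨by omega, hmin⟩ hnl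
        · omega
    · rintro (⟨h1, h2⟩ | ⟨h1, h2⟩) <;> rw [h1, h2] <;> omega
  rw [hset]
  have hdisj : Disjoint {v : V | G.dist x v = j ∧ G.dist y v = j + 1}
      {v : V | G.dist y v = j ∧ G.dist x v = j + 1} := by
    rw [Set.disjoint_left]
    rintro v ⟨h1, h2⟩ ⟨h3, h4⟩
    omega
  rw [Set.ncard_union_eq hdisj (Set.toFinite _) (Set.toFinite _)]
  have hA : {v : V | G.dist x v = j ∧ G.dist y v = j + 1}.ncard = (k - 1) ^ j := by
    have hfe : {v : V | G.dist x v = j ∧ G.dist y v = j + 1}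
        = ↑(Finset.univ.filter (fun v => G.dist x v = j ∧ G.dist y v = j + 1)) := by
      ext v; simp
    rw [hfe, Set.ncard_coe_finset]
    exact card_level hconn hxy hcyc hreg (by omega) j hjd
  have hB : {v : V | G.dist y v = j ∧ G.dist x v = j + 1}.ncard = (k - 1) ^ j := by
    have hfe : {v : V | G.dist y v = j ∧ G.dist x v = j + 1}
        = ↑(Finset.univ.filter (fun v => G.dist y v = j ∧ G.dist x v = j + 1)) := by
      ext v; simp
    rw [hfe, Set.ncard_coe_finset]
    exact card_level hconn hxy.symm hcyc hreg (by omega) j hjd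
  rw [hA, hB]
  omega
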